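/- arXiv:1605.02583 — 3 statements merged into one kernel-verified Lean document; each statement's English description precedes it below -/
import Mathlib

section
/- Let P, C, D be points in the Euclidean plane with C ≠ P, let A be the point symmetric to C with respect to P (i.e., P is the midpoint of segment CA), and suppose D lies on the circle with center A and radius AP. Let B be a point on line PD with B ≠ P lying on the circle with center C and radius CP. Then the quadrilateral ABCD is a parallelogram, i.e., vector AB equals vector DC. -/
open RealInnerProductSpace


theorem stmt0 (P C A D B : EuclideanSpace ℝ (Fin 2))
    (hCP : C ≠ P) (hA : A = (2:ℝ) • P - C)
    (hD : dist A D = dist A P)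
    (hBline : ∃ t : ℝ, t < 0 ∧ B - P = t • (D - P))
    (hBP : B ≠ P) (hB : dist C B = dist C P) :
    B - A = C - D := by
  obtain ⟨t, ht, htB⟩ := hBline
  have hB' : B = P + t • (D - P) := by
    have := htB
    linear_combination (norm := module) this
  have hDP : D ≠ P := by
    intro h
    apply hBP
    rw [h] at htB
    simpa [sub_eq_zero] using htB
  have hu : ‖D - P‖ ≠ 0 := by simpa [sub_eq_zero] using hDP
  have hu2 : (0:ℝ) < ‖D - P‖ ^ 2 := by positivity
  -- turn dist equalities into inner product equalities
  have hD2 : (inner ℝ (A - D) (A - D) : ℝ) = (inner ℝ (A - P) (A - P) : ℝ) := by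
    rw [real_inner_self_eq_norm_sq, real_inner_self_eq_norm_sq,
      ← dist_eq_norm, ← dist_eq_norm, hD]
  have hB2 : (inner ℝ (C - B) (C - B) : ℝ) = (inner ℝ (C - P) (C - P) : ℝ) := by
    rw [real_inner_self_eq_norm_sq, real_inner_self_eq_norm_sq,
      ← dist_eq_norm, ← dist_eq_norm, hB]
  have hnu : (inner ℝ (D - P) (D - P) : ℝ) = ‖D - P‖ ^ 2 := real_inner_self_eq_norm_sq _
  -- expand
  have c1 : (inner ℝ C P : ℝ) = inner ℝ P C := real_inner_comm _ _
  have c2 : (inner ℝ D P : ℝ) = inner ℝ P D := real_inner_comm _ _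
  have c3 : (inner ℝ D C : ℝ) = inner ℝ C D := real_inner_comm _ _
  have hnu' := hnu
  simp only [inner_sub_left, inner_sub_right] at hnu'
  have e1 : ‖D - P‖ ^ 2 + 2 * (inner ℝ (C - P) (D - P) : ℝ) = 0 := by
    have h1 : A - D = (P - C) - (D - P) := by rw [hA]; module
    have hAP : A - P = P - C := by rw [hA]; module
    rw [h1, hAP] at hD2
    simp only [inner_sub_left, inner_sub_right] at hD2 ⊢
    linarith [c1, c2, c3, hnu']
  have e2 : t * t * ‖D - P‖ ^ 2 - 2 * t * (inner ℝ (C - P) (D - P) : ℝ) = 0 := by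
    have h2 : C - B = (C - P) - t • (D - P) := by rw [hB']; module
    rw [h2] at hB2
    simp only [inner_sub_left, inner_sub_right, inner_smul_left, inner_smul_right,
      starRingEnd_apply, star_trivial] at hB2
    simp only [inner_sub_left, inner_sub_right]
    nlinarith [hB2, hnu', c1, c2, c3]
  have ht' : t = -1 := by
    have htne : t ≠ 0 := ne_of_lt ht
    have key : t * (t + 1) * ‖D - P‖ ^ 2 = 0 := by linear_combination e2 + t * e1
    have : t * (t + 1) = 0 := by
      rcases mul_eq_zero.mp key with h | h
      · exact h
      · exact absurd h (by positivity)
    rcases mul_eq_zero.mp this with h | h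
    · exact absurd h htne
    · linarith
  rw [hB', hA, ht']
  module
end

section
/- Let P, C, A, B, D be points in the plane with A = 2P - C (A symmetric to C through P). Suppose dist(C,B) = dist(C,P), dist(A,D) = dist(A,P), and B, P, D are collinear with P strictly between B and D. Then dist(P,B) = dist(P,D). -/
theorem stmt1 (P C A B D : EuclideanSpace ℝ (Fin 2))
    (hA : A = (2:ℝ) • P - C)
    (hB : dist C B = dist C P) (hD : dist A D = dist A P)
    (hbtw : Sbtw ℝ B P D) :
    dist P B = dist P D := by
  have hray : SameRay ℝ (P - B) (D - P) := by
    have := wbtw_iff_sameRay_vsub.mp hbtw.wbtw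
    simpa using this
  have hPB : P - B ≠ 0 := sub_ne_zero.mpr hbtw.ne_left
  have hDP : D - P ≠ 0 := sub_ne_zero.mpr hbtw.ne_right.symm
  obtain ⟨r₁, r₂, hr₁, hr₂, hreq⟩ := hray.exists_pos hPB hDP
  set k : ℝ := r₂ / r₁ with hk
  have hkpos : 0 < k := div_pos hr₂ hr₁
  have hPBk : P - B = k • (D - P) := by
    have h := congrArg (fun x => r₁⁻¹ • x) hreq
    simp only [smul_smul, inv_mul_cancel₀ (ne_of_gt hr₁), one_smul] at h
    rw [h, hk, div_eq_inv_mul]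
  set v : EuclideanSpace ℝ (Fin 2) := D - P with hv
  set u : EuclideanSpace ℝ (Fin 2) := A - P with hu
  have hCB : C - B = k • v - u := by
    have : C = (2:ℝ) • P - A := by rw [hA]; module
    rw [this]
    have : B = P - k • v := by rw [← hPBk]; module
    rw [this, hu]; module
  have hCP : C - P = -u := by
    have : C = (2:ℝ) • P - A := by rw [hA]; module
    rw [this, hu]; module
  have hAD : A - D = u - v := by rw [hu, hv]; module
  have e1 : ‖k • v - u‖ ^ 2 = ‖u‖ ^ 2 := by
    have := hB
    rw [dist_eq_norm, hCB] at this
    rw [this, dist_eq_norm, hCP, norm_neg]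
  have e2 : ‖u - v‖ ^ 2 = ‖u‖ ^ 2 := by
    have := hD
    rw [dist_eq_norm, hAD] at this
    rw [this, dist_eq_norm, hu]
  have ip1 : ‖k • v - u‖ ^ 2 = k ^ 2 * ‖v‖ ^ 2 - 2 * k * inner ℝ v u + ‖u‖ ^ 2 := by
    rw [norm_sub_sq_real, norm_smul, real_inner_smul_left, Real.norm_eq_abs,
      abs_of_pos hkpos]
    ring
  have ip2 : ‖u - v‖ ^ 2 = ‖u‖ ^ 2 - 2 * inner ℝ u v + ‖v‖ ^ 2 := by
    rw [norm_sub_sq_real]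
  have hsym : (inner ℝ v u : ℝ) = inner ℝ u v := real_inner_comm u v
  have hvpos : 0 < ‖v‖ := norm_pos_iff.mpr hDP
  have hk1 : k = 1 := by
    rw [ip1] at e1
    rw [ip2] at e2
    have e2' : ‖v‖ ^ 2 = 2 * (inner ℝ v u : ℝ) := by rw [hsym]; linarith
    have h1 : k ^ 2 * ‖v‖ ^ 2 - 2 * k * (inner ℝ v u : ℝ) = 0 := by linarith
    have h2 : k * ‖v‖ ^ 2 * (k - 1) = 0 := by linear_combination h1 - k * e2'
    have hne : k * ‖v‖ ^ 2 ≠ 0 := ne_of_gt (mul_pos hkpos (pow_pos hvpos 2))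
    have := (mul_eq_zero.mp h2).resolve_left hne
    linarith
  have : dist P B = ‖k • v‖ := by rw [dist_eq_norm, hPBk]
  rw [this, norm_smul, hk1]
  simp [hv, dist_eq_norm]
  rw [norm_sub_rev]
end

section
/- Let P, C be points with C ≠ P, A = 2P - C. The set of points D ≠ P such that, with B defined as the second intersection of line PD with the circle centered at C of radius CP, the quadrilateral ABCD is a parallelogram, is exactly the circle centered at A with radius AP minus the point P. -/
theorem stmt12 (P C A : EuclideanSpace ℝ (Fin 2))
    (hCP : C ≠ P) (hA : A = (2:ℝ) • P - C) :
    ∀ D B : EuclideanSpace ℝ (Fin 2), D ≠ P →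
      ¬ Collinear ℝ ({A, C, D} : Set (EuclideanSpace ℝ (Fin 2))) →
      Collinear ℝ ({P, D, B} : Set (EuclideanSpace ℝ (Fin 2))) →
      B ≠ P → dist C B = dist C P →
      (B - A = C - D ↔ dist A D = dist A P) := by
  intro D B hDP hncol hcol hBP hCB
  obtain ⟨v, hv⟩ := (collinear_iff_of_mem (Set.mem_insert P {D, B})).mp hcol
  obtain ⟨rD, hrD⟩ := hv D (by simp)
  obtain ⟨rB, hrB⟩ := hv B (by simp)
  rw [vadd_eq_add] at hrD hrB
  have hrD0 : rD ≠ 0 := by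
    intro h
    apply hDP
    rw [h, zero_smul, zero_add] at hrD
    exact hrD
  set t : ℝ := rB / rD with ht
  have hB : B = P + t • (D - P) := by
    have hu : D - P = rD • v := by rw [hrD]; abel
    rw [hu, smul_smul, div_mul_cancel₀ _ hrD0, hrB]; abel
  have ht0 : t ≠ 0 := by
    intro h
    apply hBP
    rw [hB, h, zero_smul, add_zero]
  set u : EuclideanSpace ℝ (Fin 2) := D - P with hu
  set w : EuclideanSpace ℝ (Fin 2) := C - P with hw
  have hune : u ≠ 0 := sub_ne_zero.mpr hDP
  have hn : (0:ℝ) < ‖u‖ ^ 2 := pow_pos (norm_pos_iff.mpr hune) 2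
  -- circle condition gives the key quadratic relation
  have hkey : t * ‖u‖ ^ 2 = 2 * (inner ℝ w u : ℝ) := by
    have hCBv : C - B = w - t • u := by rw [hB, hw, hu]; module
    have h1 : ‖w - t • u‖ ^ 2 = ‖w‖ ^ 2 := by
      rw [← hCBv]
      rw [dist_eq_norm] at hCB
      rw [hCB, hw, dist_eq_norm]
    rw [norm_sub_sq_real, real_inner_smul_right, norm_smul, Real.norm_eq_abs,
      mul_pow, sq_abs] at h1
    have h2 : t * (t * ‖u‖ ^ 2) = t * (2 * (inner ℝ w u : ℝ)) := by
      linear_combination h1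
    exact mul_left_cancel₀ ht0 h2
  have hAD : dist A D = ‖u + w‖ := by
    have h3 : A - D = -(u + w) := by rw [hA, hu, hw]; module
    rw [dist_eq_norm, h3, norm_neg]
  have hAP : dist A P = ‖w‖ := by
    have h4 : A - P = -w := by rw [hA, hw]; module
    rw [dist_eq_norm, h4, norm_neg]
  constructor
  · intro h
    have hz : (t + 1) • u = (B - A) - (C - D) := by rw [hB, hA, hu]; module
    rw [h, sub_self] at hz
    have hteq : t = -1 := by
      rcases smul_eq_zero.mp hz with h1 | h1
      · linarith
      · exact absurd h1 hune
    rw [hAD, hAP]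
    have hsq : ‖u + w‖ ^ 2 = ‖w‖ ^ 2 := by
      rw [norm_add_sq_real, real_inner_comm w u]
      nlinarith [hkey]
    rw [← Real.sqrt_sq (norm_nonneg (u + w)), ← Real.sqrt_sq (norm_nonneg w), hsq]
  · intro h
    rw [hAD, hAP] at h
    have hsq : ‖u + w‖ ^ 2 = ‖w‖ ^ 2 := by rw [h]
    rw [norm_add_sq_real, real_inner_comm w u] at hsq
    have hteq : t = -1 := by
      have h5 : (1 + t) * ‖u‖ ^ 2 = 0 := by nlinarith [hkey]
      rcases mul_eq_zero.mp h5 with h1 | h1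
      · linarith
      · linarith
    rw [hB, hA, hteq]
    module
end
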